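/- Let Q range over a finite index set, and for each Q let r_Q ≥ 2 be an integer, b_Q an integer coprime to r_Q, and l_Q an integer with 0 ≤ l_Q ≤ r_Q − 1. For an integer m set c_Q(m) = −[m]_{r_Q}·(r_Q²−1)/(12 r_Q) + ∑_{j=1}^{[m]_{r_Q} − 1} [b_Q·j]_{r_Q}·(r_Q − [b_Q·j]_{r_Q})/(2 r_Q) ∈ ℚ, and write σ_Q(i) = [b_Q·i]_{r_Q}·(r_Q − [b_Q·i]_{r_Q})/(2 r_Q). Then in ℚ⟦t⟧: ∑_{n≥0} ( ∑_Q ( c_Q(l_Q − n) − c_Q(−n) ) )·t^n = ∑_Q ( (r_Q − l_Q)·(r_Q²−1)/(12 r_Q) · (1−t)⁻¹ − (1−t^{r_Q})⁻¹ · ∑_{j=0}^{r_Q−1} ( ∑_{i=j+1}^{j+r_Q−l_Q} σ_Q(i) )·t^j ), where (1−t)⁻¹ and (1−t^{r_Q})⁻¹ denote the inverses of these units in ℚ⟦t⟧. -/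

import Mathlib

open PowerSeries Finset

lemma sum_Ioc_split (f : ℤ → ℚ) {a b c : ℤ} (h1 : a ≤ b) (h2 : b ≤ c) :
    (∑ i ∈ Finset.Ioc a b, f i) + ∑ i ∈ Finset.Ioc b c, f i = ∑ i ∈ Finset.Ioc a c, f i := by
  rw [← Finset.sum_union ?_, Finset.Ioc_union_Ioc_eq_Ioc h1 h2]
  rw [Finset.disjoint_left]
  intro x hx hx'
  simp only [Finset.mem_Ioc] at hx hx'
  omega

lemma Icc_one_eq_Ioc (m : ℤ) : Finset.Icc (1:ℤ) m = Finset.Ioc 0 m := by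
  ext i; simp only [Finset.mem_Icc, Finset.mem_Ioc]; omega

noncomputable def Tsum (σ : ℤ → ℚ) (m : ℤ) : ℚ := ∑ i ∈ Finset.Icc (1:ℤ) m, σ i

lemma Tsum_nonpos (σ : ℤ → ℚ) (m : ℤ) (hm : m ≤ 0) : Tsum σ m = 0 := by
  rw [Tsum, Finset.Icc_eq_empty (by omega), Finset.sum_empty]

section Arith

variable (r : ℕ) (b : ℤ) (σ : ℤ → ℚ)

variable (hσ : ∀ i : ℤ, σ i =
  (((b * i) % (r : ℤ) : ℤ) : ℚ) * ((r : ℚ) - (((b * i) % (r : ℤ) : ℤ) : ℚ)) / (2 * r))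

include hσ

lemma sigma_congr (i i' : ℤ) (h : i % (r:ℤ) = i' % (r:ℤ)) : σ i = σ i' := by
  rw [hσ i, hσ i']
  have : (b * i) % (r:ℤ) = (b * i') % (r:ℤ) := by
    rw [Int.mul_emod, h, ← Int.mul_emod]
  rw [this]

lemma sigma_zero : σ 0 = 0 := by
  rw [hσ 0]; simp

lemma sigma_per (i : ℤ) : σ (i + (r:ℤ)) = σ i := by
  apply sigma_congr r b σ hσ
  simp [Int.add_mul_emod_self_left]

lemma sigma_R : σ (r:ℤ) = 0 := by
  have := sigma_per r b σ hσ 0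
  rw [zero_add] at this
  rw [this, sigma_zero r b σ hσ]

lemma sigma_refl (hr : 0 < r) (i : ℤ) : σ ((r:ℤ) - i) = σ i := by
  have hR : (0:ℤ) < (r:ℤ) := by exact_mod_cast hr
  set k := (b * i) % (r:ℤ) with hk
  have hdvd : (r:ℤ) ∣ b * i - k := Int.dvd_self_sub_of_emod_eq hk.symm
  have h1 : (b * ((r:ℤ) - i)) % (r:ℤ) = ((r:ℤ) - k) % (r:ℤ) := by
    rw [Int.emod_eq_emod_iff_emod_sub_eq_zero]
    have h2 : b * ((r:ℤ) - i) - ((r:ℤ) - k) = (r:ℤ) * (b - 1) - (b * i - k) := by ring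
    rw [h2]
    exact Int.emod_eq_zero_of_dvd (dvd_sub ⟨b - 1, rfl⟩ hdvd)
  have hk0 : 0 ≤ k := Int.emod_nonneg _ (ne_of_gt hR)
  have hkR : k < (r:ℤ) := Int.emod_lt_of_pos _ hR
  rcases eq_or_lt_of_le hk0 with h0 | h0
  · have h2 : (b * ((r:ℤ) - i)) % (r:ℤ) = 0 := by
      rw [h1, ← h0, sub_zero, Int.emod_self]
    rw [hσ, hσ, h2, ← hk, ← h0]
  · have h2 : (b * ((r:ℤ) - i)) % (r:ℤ) = (r:ℤ) - k := by
      rw [h1, Int.emod_eq_of_lt (by omega) (by omega)]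
    rw [hσ, hσ, h2, ← hk]
    push_cast
    ring

-- reflection of partial sums: L1
lemma refl_sum (hr : 0 < r) (a : ℤ) (ha0 : 0 ≤ a) (ha1 : a ≤ (r:ℤ)) :
    Tsum σ (a - 1) + Tsum σ ((r:ℤ) - a) = Tsum σ ((r:ℤ) - 1) := by
  have hR : (0:ℤ) < (r:ℤ) := by exact_mod_cast hr
  have hrefl : Tsum σ ((r:ℤ) - a) = ∑ i ∈ Finset.Icc a ((r:ℤ) - 1), σ i := by
    rw [Tsum]
    refine Finset.sum_nbij' (fun i => (r:ℤ) - i) (fun i => (r:ℤ) - i) ?_ ?_ ?_ ?_ ?_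
    · intro x hx; simp only [Finset.mem_Icc] at hx ⊢; omega
    · intro x hx; simp only [Finset.mem_Icc] at hx ⊢; omega
    · intro x _; omega
    · intro x _; omega
    · intro x _; simpa using (sigma_refl r b σ hσ hr x).symm
  rcases eq_or_lt_of_le ha0 with h0 | h0
  · rw [← h0, Tsum_nonpos σ _ (by omega), sub_zero, zero_add]
    have : Tsum σ (r:ℤ) = Tsum σ ((r:ℤ) - 1) + σ (r:ℤ) := by
      rw [Tsum, Tsum, Icc_one_eq_Ioc, Icc_one_eq_Ioc,
        ← sum_Ioc_split σ (a := 0) (b := (r:ℤ) - 1) (c := (r:ℤ)) (by omega) (by omega)]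
      congr 1
      rw [show Finset.Ioc ((r:ℤ) - 1) (r:ℤ) = {(r:ℤ)} by ext x; simp [Finset.mem_Ioc]; omega,
        Finset.sum_singleton]
    rw [this, sigma_R r b σ hσ, add_zero]
  · rw [hrefl, Tsum, Tsum, Icc_one_eq_Ioc, Icc_one_eq_Ioc,
      show Finset.Icc a ((r:ℤ) - 1) = Finset.Ioc (a - 1) ((r:ℤ) - 1) by
        ext x; simp only [Finset.mem_Icc, Finset.mem_Ioc]; omega]
    exact sum_Ioc_split σ (by omega) (by omega)

-- periodicity of partial sums: L2
lemma period_sum (hr : 0 < r) (m : ℤ) (hm0 : 0 ≤ m) (hm1 : m ≤ (r:ℤ)) :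
    Tsum σ (m + (r:ℤ)) = Tsum σ m + Tsum σ ((r:ℤ) - 1) := by
  have hR : (0:ℤ) < (r:ℤ) := by exact_mod_cast hr
  have hshift : ∑ i ∈ Finset.Ioc (r:ℤ) (m + (r:ℤ)), σ i = ∑ i ∈ Finset.Ioc 0 m, σ i := by
    refine Finset.sum_nbij' (fun i => i - (r:ℤ)) (fun i => i + (r:ℤ)) ?_ ?_ ?_ ?_ ?_
    · intro x hx; simp only [Finset.mem_Ioc] at hx ⊢; omega
    · intro x hx; simp only [Finset.mem_Ioc] at hx ⊢; omega
    · intro x _; omega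
    · intro x _; omega
    · intro x _
      have := sigma_per r b σ hσ (x - (r:ℤ))
      rw [sub_add_cancel] at this
      simpa using this
  have hsplit1 : Tsum σ (m + (r:ℤ)) = Tsum σ m + ∑ i ∈ Finset.Ioc m (m + (r:ℤ)), σ i := by
    rw [Tsum, Tsum, Icc_one_eq_Ioc, Icc_one_eq_Ioc, sum_Ioc_split σ hm0 (by omega)]
  have hsplit2 : ∑ i ∈ Finset.Ioc m (m + (r:ℤ)), σ i
      = (∑ i ∈ Finset.Ioc m (r:ℤ), σ i) + ∑ i ∈ Finset.Ioc 0 m, σ i := by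
    rw [← sum_Ioc_split σ (a := m) (b := (r:ℤ)) (c := m + (r:ℤ)) hm1 (by omega), hshift]
  have hfull : (∑ i ∈ Finset.Ioc 0 m, σ i) + ∑ i ∈ Finset.Ioc m (r:ℤ), σ i
      = ∑ i ∈ Finset.Ioc 0 (r:ℤ), σ i := sum_Ioc_split σ hm0 hm1
  have hlast : ∑ i ∈ Finset.Ioc 0 (r:ℤ), σ i = Tsum σ ((r:ℤ) - 1) := by
    rw [Tsum, Icc_one_eq_Ioc,
      ← sum_Ioc_split σ (a := 0) (b := (r:ℤ) - 1) (c := (r:ℤ)) (by omega) (by omega),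
      show Finset.Ioc ((r:ℤ) - 1) (r:ℤ) = {(r:ℤ)} by ext x; simp [Finset.mem_Ioc]; omega,
      Finset.sum_singleton, sigma_R r b σ hσ, add_zero]
  rw [hsplit1, hsplit2]
  rw [← hlast, ← hfull]
  ring

end Arith

lemma gauss_sum_q (n : ℕ) : ∑ k ∈ Finset.range n, (k:ℚ) = n * ((n:ℚ) - 1) / 2 := by
  induction n with
  | zero => simp
  | succ n ih =>
    rw [Finset.sum_range_succ, ih]
    push_cast
    ring

lemma weights_sum_q (n : ℕ) :
    ∑ k ∈ Finset.range n, (k:ℚ) * ((n:ℚ) - k) = n * ((n:ℚ)^2 - 1) / 6 := by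
  induction n with
  | zero => simp
  | succ n ih =>
    have h1 : ∀ k : ℕ, (k:ℚ) * (((n+1:ℕ):ℚ) - k) = (k:ℚ) * ((n:ℚ) - k) + k := by
      intro k; push_cast; ring
    rw [Finset.sum_congr rfl fun k _ => h1 k, Finset.sum_add_distrib,
      Finset.sum_range_succ, ih, Finset.sum_range_succ, gauss_sum_q]
    push_cast
    ring
section
variable (r : ℕ) (b : ℤ) (σ : ℤ → ℚ)
variable (hσ : ∀ i : ℤ, σ i =
  (((b * i) % (r : ℤ) : ℤ) : ℚ) * ((r : ℚ) - (((b * i) % (r : ℤ) : ℤ) : ℚ)) / (2 * r))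
include hσ

lemma total_sum (hr : 0 < r) (hb : IsCoprime b (r:ℤ)) :
    ∑ i ∈ Finset.Icc (1:ℤ) ((r:ℤ) - 1), σ i = ((r:ℚ)^2 - 1) / 12 := by
  have hR : (0:ℤ) < (r:ℤ) := by exact_mod_cast hr
  obtain ⟨u, v, huv⟩ := hb
  -- key modular inversion facts
  have fact : ∀ (p q w : ℤ), p * q + w * (r:ℤ) = 1 → ∀ x : ℤ,
      (p * ((q * x) % (r:ℤ))) % (r:ℤ) = x % (r:ℤ) := by
    intro p q w hpq x
    have e1 : (p * ((q * x) % (r:ℤ))) % (r:ℤ) = (p * (q * x)) % (r:ℤ) := by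
      rw [Int.mul_emod, Int.emod_emod_of_dvd _ dvd_rfl, ← Int.mul_emod]
    have e2 : p * (q * x) = x + (r:ℤ) * (-(w * x)) := by linear_combination x * hpq
    rw [e1, e2, Int.add_mul_emod_self_left]
  have fact1 := fact u b v huv
  have fact2 := fact b u v (by linarith [huv, mul_comm u b]) -- b * u + v * r = 1
  have hmem : ∀ x : ℤ, x ∈ Finset.Icc (1:ℤ) ((r:ℤ)-1) →
      (b * x) % (r:ℤ) ∈ Finset.Icc (1:ℤ) ((r:ℤ)-1) := by
    intro x hx
    simp only [Finset.mem_Icc] at hx ⊢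
    have h0 : 0 ≤ (b*x) % (r:ℤ) := Int.emod_nonneg _ (ne_of_gt hR)
    have h1 : (b*x) % (r:ℤ) < (r:ℤ) := Int.emod_lt_of_pos _ hR
    have hne : (b*x) % (r:ℤ) ≠ 0 := by
      intro h
      have := fact1 x
      rw [h, mul_zero, Int.zero_emod, Int.emod_eq_of_lt (by omega) (by omega)] at this
      omega
    omega
  have hmem' : ∀ x : ℤ, x ∈ Finset.Icc (1:ℤ) ((r:ℤ)-1) →
      (u * x) % (r:ℤ) ∈ Finset.Icc (1:ℤ) ((r:ℤ)-1) := by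
    intro x hx
    simp only [Finset.mem_Icc] at hx ⊢
    have h0 : 0 ≤ (u*x) % (r:ℤ) := Int.emod_nonneg _ (ne_of_gt hR)
    have h1 : (u*x) % (r:ℤ) < (r:ℤ) := Int.emod_lt_of_pos _ hR
    have hne : (u*x) % (r:ℤ) ≠ 0 := by
      intro h
      have := fact2 x
      rw [h, mul_zero, Int.zero_emod, Int.emod_eq_of_lt (by omega) (by omega)] at this
      omega
    omega
  have step1 : ∑ i ∈ Finset.Icc (1:ℤ) ((r:ℤ)-1), σ i
      = ∑ k ∈ Finset.Icc (1:ℤ) ((r:ℤ)-1), (k:ℚ) * ((r:ℚ) - (k:ℚ)) / (2*r) := by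
    refine Finset.sum_nbij' (fun i => (b * i) % (r:ℤ)) (fun k => (u * k) % (r:ℤ))
      hmem hmem' ?_ ?_ ?_
    · intro x hx
      simp only [Finset.mem_Icc] at hx
      rw [fact1 x, Int.emod_eq_of_lt (by omega) (by omega)]
    · intro x hx
      simp only [Finset.mem_Icc] at hx
      rw [fact2 x, Int.emod_eq_of_lt (by omega) (by omega)]
    · intro x _
      rw [hσ x]
  rw [step1]
  have step2 : ∑ k ∈ Finset.Icc (1:ℤ) ((r:ℤ)-1), (k:ℚ) * ((r:ℚ) - (k:ℚ)) / (2*r)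
      = ∑ k ∈ Finset.range r, (k:ℚ) * ((r:ℚ) - (k:ℚ)) / (2*r) := by
    rw [Finset.range_eq_Ico, ← Finset.sum_Ico_consecutive _ (Nat.zero_le 1) hr,
      show Finset.Ico 0 1 = {0} from rfl, Finset.sum_singleton]
    simp only [Nat.cast_zero, zero_mul, zero_div, zero_add]
    refine Finset.sum_nbij' (fun k : ℤ => k.toNat) (fun k : ℕ => (k:ℤ)) ?_ ?_ ?_ ?_ ?_
    · intro x hx; simp only [Finset.mem_Icc] at hx; simp only [Finset.mem_Ico]; omega
    · intro x hx; simp only [Finset.mem_Ico] at hx; simp only [Finset.mem_Icc]; omega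
    · intro x hx; simp only [Finset.mem_Icc] at hx; omega
    · intro x hx; simp only [Finset.mem_Ico] at hx; omega
    · intro x hx
      simp only [Finset.mem_Icc] at hx
      have : ((x.toNat : ℕ) : ℚ) = (x : ℚ) := by
        have : (x.toNat : ℤ) = x := by omega
        exact_mod_cast congrArg (fun z : ℤ => (z:ℚ)) this
      rw [this]
  rw [step2, ← Finset.sum_div, weights_sum_q]
  have : (r:ℚ) ≠ 0 := by positivity
  field_simp
  ring
end

lemma Tsum_def (σ : ℤ → ℚ) (m : ℤ) : ∑ i ∈ Finset.Icc (1:ℤ) m, σ i = Tsum σ m := rfl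

lemma emod_small (r : ℕ) (hr : 0 < r) (x : ℤ) (h0 : -(r:ℤ) ≤ x) (h1 : x < (r:ℤ)) :
    x % (r:ℤ) = if 0 ≤ x then x else x + (r:ℤ) := by
  have hR : (0:ℤ) < (r:ℤ) := by exact_mod_cast hr
  split_ifs with h
  · exact Int.emod_eq_of_lt h h1
  · rw [← Int.add_mul_emod_self_left (a := x) (b := (r:ℤ)) (c := 1), mul_one]
    apply Int.emod_eq_of_lt <;> omega

lemma key_identity (r : ℕ) (hr : 2 ≤ r) (b l : ℤ) (hb : IsCoprime b (r:ℤ))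
    (hl0 : 0 ≤ l) (hl1 : l ≤ (r:ℤ) - 1) (σ : ℤ → ℚ)
    (hσ : ∀ i : ℤ, σ i =
      (((b * i) % (r : ℤ) : ℤ) : ℚ) * ((r : ℚ) - (((b * i) % (r : ℤ) : ℤ) : ℚ)) / (2 * r))
    (c : ℤ → ℚ)
    (hc : ∀ m : ℤ, c m = -((m % (r:ℤ) : ℤ) : ℚ) * ((r:ℚ)^2 - 1) / (12 * r)
      + ∑ j ∈ Finset.Icc (1:ℤ) (m % (r:ℤ) - 1), σ j)
    (j : ℤ) (hj0 : 0 ≤ j) (hj1 : j ≤ (r:ℤ) - 1) :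
    c (l - j) - c (-j)
      = ((r:ℚ) - l) * ((r:ℚ)^2 - 1) / (12 * r)
        - ∑ i ∈ Finset.Icc (j + 1) (j + (r:ℤ) - l), σ i := by
  have hr0 : 0 < r := by omega
  have hR : (2:ℤ) ≤ (r:ℤ) := by exact_mod_cast hr
  have hS : Tsum σ ((r:ℤ) - 1) = ((r:ℚ)^2 - 1) / 12 := total_sum r b σ hσ hr0 hb
  have hrQ : (r:ℚ) ≠ 0 := by positivity
  have hQ : (r:ℚ) * (((r:ℚ)^2 - 1) / (12 * r)) = Tsum σ ((r:ℤ) - 1) := by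
    rw [hS]; field_simp
  have e3 : ∑ i ∈ Finset.Icc (j + 1) (j + (r:ℤ) - l), σ i
      = Tsum σ (j + (r:ℤ) - l) - Tsum σ j := by
    have hsp := sum_Ioc_split σ (a := 0) (b := j) (c := j + (r:ℤ) - l) hj0 (by omega)
    rw [Tsum, Tsum, Icc_one_eq_Ioc, Icc_one_eq_Ioc, ← hsp,
      show Finset.Icc (j+1) (j+(r:ℤ)-l) = Finset.Ioc j (j + (r:ℤ) - l) by
        ext x; simp only [Finset.mem_Icc, Finset.mem_Ioc]; omega]
    ring
  rw [hc, hc, e3, Tsum_def, Tsum_def]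
  by_cases hj : j = 0
  · subst hj
    rw [show l - 0 = l by ring, neg_zero, Int.zero_emod,
      Int.emod_eq_of_lt (by omega) (by omega)]
    rw [show (0:ℤ) - 1 = -1 by ring, Tsum_nonpos σ (-1) (by omega),
      Tsum_nonpos σ 0 (by omega)]
    have h1 := refl_sum r b σ hσ hr0 l hl0 (by omega)
    rw [show (0:ℤ) + (r:ℤ) - l = (r:ℤ) - l by ring]
    push_cast
    linear_combination h1 - hQ
  · have hm2 : (-j) % (r:ℤ) = -j + (r:ℤ) := by
      rw [emod_small r hr0 _ (by omega) (by omega), if_neg (by omega)]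
    by_cases hjl : j ≤ l
    · -- case B : 1 ≤ j ≤ l
      have hm1 : (l - j) % (r:ℤ) = l - j := by
        rw [emod_small r hr0 _ (by omega) (by omega), if_pos (by omega)]
      rw [hm1, hm2]
      have h1 : Tsum σ (l - j - 1) + Tsum σ (j + (r:ℤ) - l) = Tsum σ ((r:ℤ) - 1) := by
        have := refl_sum r b σ hσ hr0 (l - j) (by omega) (by omega)
        rw [show (r:ℤ) - (l - j) = j + (r:ℤ) - l by ring] at this
        exact this
      have h2 : Tsum σ (-j + (r:ℤ) - 1) + Tsum σ j = Tsum σ ((r:ℤ) - 1) := by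
        have := refl_sum r b σ hσ hr0 ((r:ℤ) - j) (by omega) (by omega)
        rw [show (r:ℤ) - j - 1 = -j + (r:ℤ) - 1 by ring,
          show (r:ℤ) - ((r:ℤ) - j) = j by ring] at this
        exact this
      push_cast
      linear_combination h1 - h2
    · -- case C : l < j
      have hm1 : (l - j) % (r:ℤ) = l - j + (r:ℤ) := by
        rw [emod_small r hr0 _ (by omega) (by omega), if_neg (by omega)]
      rw [hm1, hm2]
      have hP : Tsum σ (j + (r:ℤ) - l) = Tsum σ (j - l) + Tsum σ ((r:ℤ) - 1) := by
        have := period_sum r b σ hσ hr0 (j - l) (by omega) (by omega)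
        rw [show j - l + (r:ℤ) = j + (r:ℤ) - l by ring] at this
        exact this
      have h1 : Tsum σ (l - j + (r:ℤ) - 1) + Tsum σ (j - l) = Tsum σ ((r:ℤ) - 1) := by
        have := refl_sum r b σ hσ hr0 ((r:ℤ) - (j - l)) (by omega) (by omega)
        rw [show (r:ℤ) - (j - l) - 1 = l - j + (r:ℤ) - 1 by ring,
          show (r:ℤ) - ((r:ℤ) - (j - l)) = j - l by ring] at this
        exact this
      have h2 : Tsum σ (-j + (r:ℤ) - 1) + Tsum σ j = Tsum σ ((r:ℤ) - 1) := by
        have := refl_sum r b σ hσ hr0 ((r:ℤ) - j) (by omega) (by omega)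
        rw [show (r:ℤ) - j - 1 = -j + (r:ℤ) - 1 by ring,
          show (r:ℤ) - ((r:ℤ) - j) = j by ring] at this
        exact this
      push_cast
      linear_combination hP + h1 - h2 - hQ


lemma series_aux (r : ℕ) (hr : 0 < r) (f : ℕ → ℚ) (hf : ∀ n, f (n + r) = f n)
    (g : ℚ) (s : ℕ → ℚ) (hs : ∀ j, j < r → f j = g - s j) :
    PowerSeries.mk f
      = PowerSeries.C g * (1 - X)⁻¹
        - (1 - X ^ r)⁻¹ * ∑ j ∈ Finset.range r, PowerSeries.C (s j) * X ^ j := by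
  set u : ℚ⟦X⟧ := 1 - X ^ r with hu
  set v : ℚ⟦X⟧ := 1 - X with hv
  have hu0 : constantCoeff u ≠ 0 := by
    simp [hu, zero_pow hr.ne']
  have hv0 : constantCoeff v ≠ 0 := by simp [hv]
  have hcancel : ∀ A B : ℚ⟦X⟧, A * u = B * u → A = B := by
    intro A B h
    have := congrArg (· * u⁻¹) h
    simpa [mul_assoc, PowerSeries.mul_inv_cancel u hu0] using this
  apply hcancel
  have hgeom : v * ∑ j ∈ Finset.range r, (X : ℚ⟦X⟧) ^ j = u := by
    have := geom_sum_mul (X : ℚ⟦X⟧) r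
    rw [hv, hu]
    calc (1 - X) * ∑ j ∈ Finset.range r, (X : ℚ⟦X⟧) ^ j
        = -((∑ j ∈ Finset.range r, (X : ℚ⟦X⟧) ^ j) * (X - 1)) := by ring
      _ = 1 - X ^ r := by rw [this]; ring
  have hvinv : v⁻¹ * u = ∑ j ∈ Finset.range r, (X : ℚ⟦X⟧) ^ j := by
    rw [← hgeom, ← mul_assoc, PowerSeries.inv_mul_cancel v hv0, one_mul]
  have hrhs : (PowerSeries.C g * v⁻¹
        - u⁻¹ * ∑ j ∈ Finset.range r, PowerSeries.C (s j) * X ^ j) * u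
      = PowerSeries.C g * ∑ j ∈ Finset.range r, (X : ℚ⟦X⟧) ^ j
        - ∑ j ∈ Finset.range r, PowerSeries.C (s j) * X ^ j := by
    rw [sub_mul, mul_assoc, hvinv]
    congr 1
    rw [mul_comm (u⁻¹) _, mul_assoc, PowerSeries.inv_mul_cancel u hu0, mul_one]
  rw [hrhs]
  ext n
  rw [hu, mul_sub, mul_one, map_sub, map_sub, coeff_mk,
    PowerSeries.coeff_mul_X_pow', Finset.mul_sum, map_sum, map_sum]
  have h1 : ∀ j ∈ Finset.range r, (coeff n) (PowerSeries.C g * X ^ j)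
      = if n = j then g else 0 := by
    intro j _
    rw [PowerSeries.coeff_C_mul, PowerSeries.coeff_X_pow]
    split_ifs <;> simp
  have h2 : ∀ j ∈ Finset.range r, (coeff n) (PowerSeries.C (s j) * X ^ j)
      = if n = j then s j else 0 := by
    intro j _
    rw [PowerSeries.coeff_C_mul, PowerSeries.coeff_X_pow]
    split_ifs <;> simp
  rw [Finset.sum_congr rfl h1, Finset.sum_congr rfl h2, Finset.sum_ite_eq _ n,
    Finset.sum_ite_eq _ n]
  by_cases hn : n < r
  · rw [if_neg (by omega), if_pos (by simpa), if_pos (by simpa)]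
    simpa using hs n hn
  · rw [if_pos (by omega), if_neg (by simpa using hn), if_neg (by simpa using hn)]
    have : f n = f (n - r) := by
      conv_lhs => rw [show n = (n - r) + r by omega]
      exact hf _
    rw [coeff_mk, ← this]
    ring


/-- Lemma 3.2 of the paper (arithmetic content).  For a finite family of singularity data
`(r_Q, b_Q, l_Q)` with `r_Q ≥ 2`, `gcd(b_Q, r_Q) = 1`, `0 ≤ l_Q ≤ r_Q − 1`, and Orbifold
Riemann–Roch contributions
`c_Q(m) = −[m]_{r_Q}·(r_Q²−1)/(12r_Q) + ∑_{j=1}^{[m]_{r_Q}−1} σ_Q(j)` where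
`σ_Q(i) = [b_Q·i]_{r_Q}·(r_Q−[b_Q·i]_{r_Q})/(2r_Q)`, one has in `ℚ⟦t⟧`:
`∑_{n≥0} (∑_Q (c_Q(l_Q−n) − c_Q(−n)))·tⁿ
 = ∑_Q ((r_Q−l_Q)(r_Q²−1)/(12r_Q)·(1−t)⁻¹
        − (1−t^{r_Q})⁻¹·∑_{j=0}^{r_Q−1} (∑_{i=j+1}^{j+r_Q−l_Q} σ_Q(i))·t^j)`. -/
theorem torsion_hilbert_series_identity {ι : Type*} [Fintype ι]
    (r : ι → ℕ) (hr : ∀ q, 2 ≤ r q) (b l : ι → ℤ)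
    (hb : ∀ q, IsCoprime (b q) ((r q : ℤ)))
    (hl0 : ∀ q, 0 ≤ l q) (hl1 : ∀ q, l q ≤ (r q : ℤ) - 1)
    (σ : ι → ℤ → ℚ)
    (hσ : ∀ q (i : ℤ), σ q i =
      (((b q * i) % (r q : ℤ) : ℤ) : ℚ)
        * ((r q : ℚ) - (((b q * i) % (r q : ℤ) : ℤ) : ℚ)) / (2 * r q))
    (c : ι → ℤ → ℚ)
    (hc : ∀ q (m : ℤ), c q m =
      -((m % (r q : ℤ) : ℤ) : ℚ) * ((r q : ℚ) ^ 2 - 1) / (12 * r q)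
        + ∑ j ∈ Finset.Icc (1 : ℤ) (m % (r q : ℤ) - 1), σ q j) :
    PowerSeries.mk (fun n : ℕ => ∑ q, (c q (l q - n) - c q (-(n : ℤ))))
      = ∑ q, (PowerSeries.C (((r q : ℚ) - l q) * ((r q : ℚ) ^ 2 - 1) / (12 * r q))
            * (1 - X)⁻¹
          - (1 - X ^ (r q))⁻¹
            * ∑ j ∈ Finset.range (r q),
                PowerSeries.C (∑ i ∈ Finset.Icc ((j : ℤ) + 1) ((j : ℤ) + r q - l q), σ q i)
                  * (X : PowerSeries ℚ) ^ j) := by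
  have step : ∀ q, PowerSeries.mk (fun n : ℕ => c q (l q - n) - c q (-(n : ℤ)))
      = PowerSeries.C (((r q : ℚ) - l q) * ((r q : ℚ) ^ 2 - 1) / (12 * r q))
            * (1 - X)⁻¹
          - (1 - X ^ (r q))⁻¹
            * ∑ j ∈ Finset.range (r q),
                PowerSeries.C (∑ i ∈ Finset.Icc ((j : ℤ) + 1) ((j : ℤ) + r q - l q), σ q i)
                  * (X : PowerSeries ℚ) ^ j := by
    intro q
    apply series_aux (r q) (by have := hr q; omega)
    · intro n
      have hper : ∀ m : ℤ, c q (m - (r q : ℤ)) = c q m := by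
        intro m
        rw [hc q, hc q, show (m - (r q : ℤ)) % (r q : ℤ) = m % (r q : ℤ) by
          rw [← Int.add_mul_emod_self_left (a := m - (r q : ℤ)) (b := (r q : ℤ)) (c := 1),
            mul_one, sub_add_cancel]]
      have e1 : ((n + r q : ℕ) : ℤ) = (n : ℤ) + (r q : ℤ) := by push_cast; ring
      rw [e1, show l q - ((n : ℤ) + (r q : ℤ)) = (l q - (n : ℤ)) - (r q : ℤ) by ring,
        show -((n : ℤ) + (r q : ℤ)) = (-(n : ℤ)) - (r q : ℤ) by ring, hper, hper]
    · intro j hj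
      exact key_identity (r q) (hr q) (b q) (l q) (hb q) (hl0 q) (hl1 q) (σ q) (hσ q)
        (c q) (hc q) (j : ℤ) (by positivity) (by omega)
  have hsplit : PowerSeries.mk (fun n : ℕ => ∑ q, (c q (l q - n) - c q (-(n : ℤ))))
      = ∑ q, PowerSeries.mk (fun n : ℕ => c q (l q - n) - c q (-(n : ℤ))) := by
    ext n
    simp only [coeff_mk, map_sum]
  rw [hsplit]
  exact Finset.sum_congr rfl fun q _ => step q
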